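/- Under the above hypotheses, Pr[E_i] ≤ 4^{|I_i|}·2^{−0.025·(n/γ)·log log n}; in particular, since |I_i| ≤ √n, for sufficiently large n, Pr[E_i] ≤ 2^{−0.02·(n/γ)·log log n}. The proof takes a union bound over subsets S ⊆ I_i with ∑_{(I_A,I_B)∈S}|I_B| ≥ n/(8γ), and for each S bounds Pr[∧_{(I_A,I_B)∈S} E(I_A,I_B)] by the product of conditional probabilities, each at most 2·2^{−0.2|I_B| log log n}. -/

import Mathlib

open Classical Real Finset in
lemma stmt13_chain {Ω ι : Type} [Fintype Ω] [LinearOrder ι]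
    (μ : Ω → ℝ) (I : Finset ι) (E : ι → Finset Ω) (g : ι → ℝ)
    (hsum : ∑ ω, μ ω = 1) (hg : ∀ p, 0 ≤ g p)
    (hcond : ∀ p ∈ I, ∀ S ⊆ I.filter (fun p' => p' < p),
      ∑ ω ∈ (E p ∩ Finset.univ.filter (fun ω => ∀ r ∈ S, ω ∈ E r)), μ ω ≤
        g p * ∑ ω ∈ Finset.univ.filter (fun ω => ∀ r ∈ S, ω ∈ E r), μ ω)
    (S : Finset ι) :
    S ⊆ I → ∑ ω ∈ Finset.univ.filter (fun ω => ∀ r ∈ S, ω ∈ E r), μ ω ≤ ∏ p ∈ S, g p := by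
  induction S using Finset.strongInduction with
  | _ S ih =>
    intro hSI
    rcases S.eq_empty_or_nonempty with rfl | hne
    · simp [hsum]
    · set p := S.max' hne with hp
      have hpS : p ∈ S := S.max'_mem hne
      set S' := S.erase p with hS'
      have hsub : S' ⊂ S := Finset.erase_ssubset hpS
      have hS'I : S' ⊆ I.filter (fun p' => p' < p) := by
        intro r hr
        simp only [Finset.mem_filter]
        exact ⟨hSI (S.erase_subset p hr),
          lt_of_le_of_ne (S.le_max' r (S.erase_subset p hr)) (Finset.ne_of_mem_erase hr)⟩
      have key := hcond p (hSI hpS) S' hS'I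
      have hfe : Finset.univ.filter (fun ω => ∀ r ∈ S, ω ∈ E r) =
          E p ∩ Finset.univ.filter (fun ω => ∀ r ∈ S', ω ∈ E r) := by
        ext ω
        simp only [Finset.mem_filter, Finset.mem_inter, Finset.mem_univ, true_and, hS']
        constructor
        · intro h; exact ⟨h p hpS, fun r hr => h r (S.erase_subset p hr)⟩
        · intro h r hr
          by_cases hrp : r = p
          · subst hrp; exact h.1
          · exact h.2 r (Finset.mem_erase.mpr ⟨hrp, hr⟩)
      have hrec := ih S' hsub (fun r hr => hSI (S.erase_subset p hr))
      calc ∑ ω ∈ Finset.univ.filter (fun ω => ∀ r ∈ S, ω ∈ E r), μ ω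
          = ∑ ω ∈ (E p ∩ Finset.univ.filter (fun ω => ∀ r ∈ S', ω ∈ E r)), μ ω := by rw [hfe]
        _ ≤ g p * ∑ ω ∈ Finset.univ.filter (fun ω => ∀ r ∈ S', ω ∈ E r), μ ω := key
        _ ≤ g p * ∏ q ∈ S', g q := mul_le_mul_of_nonneg_left hrec (hg p)
        _ = ∏ q ∈ S, g q := Finset.mul_prod_erase S g hpS

open Real in
lemma stmt13_prod_rpow {ι : Type} (S : Finset ι) (f : ι → ℝ) :
    ∏ p ∈ S, (2:ℝ) ^ (f p) = (2:ℝ) ^ (∑ p ∈ S, f p) := by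
  induction S using Finset.cons_induction with
  | empty => simp
  | cons a s ha ih => rw [Finset.prod_cons, Finset.sum_cons, ih, ← Real.rpow_add (by norm_num)]

open Real Filter in
lemma stmt13_ev : ∃ N : ℕ, ∀ n : ℕ, N ≤ n → 16 ≤ n ∧
    (Real.logb 2 n) ^ (1000:ℕ) ≤ 0.0025 * (n:ℝ) ^ (0.49:ℝ) := by
  have h1 : ∀ᶠ x : ℝ in atTop, Real.log x ≤ x ^ (0.0001:ℝ) := by
    have hb := (isLittleO_log_rpow_atTop (by norm_num : (0:ℝ) < 0.0001)).bound
      (by norm_num : (0:ℝ) < 1)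
    filter_upwards [hb, eventually_ge_atTop (0:ℝ)] with x hx hx0
    calc Real.log x ≤ |Real.log x| := le_abs_self _
      _ ≤ 1 * ‖x ^ (0.0001:ℝ)‖ := hx
      _ = x ^ (0.0001:ℝ) := by
          rw [one_mul, Real.norm_eq_abs, abs_of_nonneg (Real.rpow_nonneg hx0 _)]
  have h2 : ∀ᶠ x : ℝ in atTop, (2:ℝ)^(1000:ℕ)/0.0025 ≤ x ^ (0.39:ℝ) :=
    (tendsto_rpow_atTop (by norm_num : (0:ℝ) < 0.39)).eventually_ge_atTop _
  have h3 : ∀ᶠ x : ℝ in atTop,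
      Real.logb 2 x ^ (1000:ℕ) ≤ 0.0025 * x ^ (0.49:ℝ) := by
    filter_upwards [h1, h2, eventually_ge_atTop (1:ℝ)] with x hx1 hx2 hx0
    have hxpos : (0:ℝ) < x := lt_of_lt_of_le one_pos hx0
    have hL : Real.logb 2 x ≤ 2 * x ^ (0.0001:ℝ) := by
      rw [Real.logb, div_le_iff₀ (Real.log_pos one_lt_two)]
      nlinarith [Real.log_two_gt_d9, Real.rpow_nonneg hxpos.le (0.0001:ℝ)]
    have hL0 : 0 ≤ Real.logb 2 x := Real.logb_nonneg one_lt_two hx0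
    have hpow : Real.logb 2 x ^ (1000:ℕ) ≤ (2 * x ^ (0.0001:ℝ)) ^ (1000:ℕ) :=
      pow_le_pow_left₀ hL0 hL 1000
    have hxp : (x ^ (0.0001:ℝ)) ^ (1000:ℕ) = x ^ (0.1:ℝ) := by
      rw [← Real.rpow_natCast (x ^ (0.0001:ℝ)) 1000, ← Real.rpow_mul hxpos.le]
      norm_num
    have hsplit : x ^ (0.49:ℝ) = x ^ (0.1:ℝ) * x ^ (0.39:ℝ) := by
      rw [← Real.rpow_add hxpos]; norm_num
    have h9 : (0:ℝ) ≤ x ^ (0.1:ℝ) := Real.rpow_nonneg hxpos.le _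
    calc Real.logb 2 x ^ (1000:ℕ) ≤ (2 * x ^ (0.0001:ℝ)) ^ (1000:ℕ) := hpow
      _ = (2:ℝ)^(1000:ℕ) * x ^ (0.1:ℝ) := by rw [mul_pow, hxp]
      _ ≤ 0.0025 * x ^ (0.49:ℝ) := by
          rw [hsplit]
          have h10 := mul_le_mul_of_nonneg_left hx2 h9
          calc (2:ℝ)^(1000:ℕ) * x ^ (0.1:ℝ)
              = 0.0025 * (x ^ (0.1:ℝ) * ((2:ℝ)^(1000:ℕ) / 0.0025)) := by ring
            _ ≤ 0.0025 * (x ^ (0.1:ℝ) * x ^ (0.39:ℝ)) :=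
                mul_le_mul_of_nonneg_left h10 (by norm_num)
  have h4 : ∀ᶠ n : ℕ in atTop, Real.logb 2 n ^ (1000:ℕ) ≤ 0.0025 * (n:ℝ) ^ (0.49:ℝ) :=
    (tendsto_natCast_atTop_atTop (R := ℝ)).eventually h3
  rcases (h4.and (eventually_ge_atTop 16)).exists_forall_of_atTop with ⟨N, hN⟩
  exact ⟨N, fun n hn => ⟨(hN n hn).2, (hN n hn).1⟩⟩

set_option maxHeartbeats 1600000


open Classical Real Finset in
/-- Sequential conditioning bound.  `I` is a collection of (pairwise-disjoint,
linearly ordered) interval pairs, each with `|I_B| = b p ≥ √n`, total weight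
`∑ b p ≤ n`.  If each event `E p` has conditional probability at most
`2·2^{−0.2·b p·log log n}` given any intersection of earlier events, and the
event `Ei` implies that the pairs `p` with `E p` occurring carry total weight at
least `n/(8γ)` (where `γ = log^{c+1000} n`), then
`Pr[Ei] ≤ 4^{|I|}·2^{−0.025·(n/γ)·log log n}`, and in particular
`Pr[Ei] ≤ 2^{−0.02·(n/γ)·log log n}` for sufficiently large `n`. -/
theorem stmt13 :
    ∃ N : ℕ, ∀ n ≥ N, ∀ c : ℕ, 1 ≤ c →
      (c : ℝ) ≤ Real.logb 2 n / (100 * Real.logb 2 (Real.logb 2 n)) →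
      ∀ (Ω ι : Type) [Fintype Ω] [LinearOrder ι]
        (μ : Ω → ℝ) (I : Finset ι) (b : ι → ℕ) (E : ι → Finset Ω) (Ei : Finset Ω),
      (∀ ω, 0 ≤ μ ω) → (∑ ω, μ ω = 1) →
      (∀ p ∈ I, Real.sqrt n ≤ (b p : ℝ)) →
      ((∑ p ∈ I, (b p : ℝ)) ≤ (n : ℝ)) →
      (∀ p ∈ I, ∀ S ⊆ I.filter (fun p' => p' < p),
        ∑ ω ∈ (E p ∩ Finset.univ.filter (fun ω => ∀ r ∈ S, ω ∈ E r)), μ ω ≤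
          2 * 2 ^ (-(0.2 : ℝ) * (b p : ℝ) * Real.logb 2 (Real.logb 2 n)) *
            ∑ ω ∈ Finset.univ.filter (fun ω => ∀ r ∈ S, ω ∈ E r), μ ω) →
      (∀ ω ∈ Ei, (n : ℝ) / (8 * (Real.logb 2 n) ^ (c + 1000)) ≤
          ∑ p ∈ I.filter (fun p => ω ∈ E p), (b p : ℝ)) →
      (∑ ω ∈ Ei, μ ω ≤ 4 ^ I.card *
          2 ^ (-(0.025 : ℝ) * ((n : ℝ) / (Real.logb 2 n) ^ (c + 1000)) *
            Real.logb 2 (Real.logb 2 n)))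
      ∧ (∑ ω ∈ Ei, μ ω ≤
          2 ^ (-(0.02 : ℝ) * ((n : ℝ) / (Real.logb 2 n) ^ (c + 1000)) *
            Real.logb 2 (Real.logb 2 n))) := by
  obtain ⟨N, hN⟩ := stmt13_ev
  refine ⟨N, fun n hn c hc1 hc2 Ω ι _ _ μ I b E Ei hμ hsum hb hbn hcond hEi => ?_⟩
  obtain ⟨hn16, hP⟩ := hN n hn
  set L := Real.logb 2 n with hLdef
  set LL := Real.logb 2 L with hLLdef
  have hnpos : (0:ℝ) < n := by
    have : (16:ℝ) ≤ n := by exact_mod_cast hn16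
    linarith
  have hn16' : (16:ℝ) ≤ n := by exact_mod_cast hn16
  have hL4 : (4:ℝ) ≤ L := by
    have h16 : Real.logb 2 (16:ℝ) = 4 := by
      rw [show (16:ℝ) = 2 ^ (4:ℕ) by norm_num, Real.logb_pow, Real.logb_self_eq_one] <;> norm_num
    calc (4:ℝ) = Real.logb 2 (16:ℝ) := h16.symm
      _ ≤ L := Real.logb_le_logb_of_le one_lt_two (by norm_num) hn16'
  have hLpos : (0:ℝ) < L := by linarith
  have hLL2 : (2:ℝ) ≤ LL := by
    have h4 : Real.logb 2 (4:ℝ) = 2 := by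
      rw [show (4:ℝ) = 2 ^ (2:ℕ) by norm_num, Real.logb_pow, Real.logb_self_eq_one] <;> norm_num
    calc (2:ℝ) = Real.logb 2 (4:ℝ) := h4.symm
      _ ≤ LL := Real.logb_le_logb_of_le one_lt_two (by norm_num) hL4
  have hLL0 : (0:ℝ) ≤ LL := by linarith
  set γ := L ^ (c + 1000) with hγdef
  have hγpos : (0:ℝ) < γ := pow_pos hLpos _
  set X := (2:ℝ) ^ (-(0.025:ℝ) * ((n:ℝ) / γ) * LL) with hXdef
  have hX0 : (0:ℝ) ≤ X := Real.rpow_nonneg (by norm_num) _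
  -- chain bound
  set g : ι → ℝ := fun p => 2 * (2:ℝ) ^ (-(0.2:ℝ) * (b p : ℝ) * LL) with hgdef
  have hg : ∀ p, 0 ≤ g p := fun p => by
    have := Real.rpow_nonneg (by norm_num : (0:ℝ) ≤ 2) (-(0.2:ℝ) * (b p : ℝ) * LL)
    simp only [hgdef]; linarith
  have hchain := stmt13_chain μ I E g hsum hg hcond
  -- union bound
  set 𝒮 := I.powerset.filter
    (fun S => (n:ℝ) / (8 * γ) ≤ ∑ p ∈ S, (b p : ℝ)) with h𝒮def
  have hstep1 : ∑ ω ∈ Ei, μ ω ≤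
      ∑ S ∈ 𝒮, ∑ ω ∈ Finset.univ.filter (fun ω => ∀ r ∈ S, ω ∈ E r), μ ω := by
    have hifnn : ∀ (ω : Ω) (S : Finset ι),
        0 ≤ (if (∀ r ∈ S, ω ∈ E r) then μ ω else 0) := by
      intro ω S
      split
      · exact hμ ω
      · exact le_rfl
    have hpt : ∀ ω ∈ Ei, μ ω ≤ ∑ S ∈ 𝒮, (if (∀ r ∈ S, ω ∈ E r) then μ ω else 0) := by
      intro ω hω
      have hmem : I.filter (fun p => ω ∈ E p) ∈ 𝒮 := Finset.mem_filter.mpr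
        ⟨Finset.mem_powerset.mpr (Finset.filter_subset _ _), hEi ω hω⟩
      calc μ ω = (if (∀ r ∈ I.filter (fun p => ω ∈ E p), ω ∈ E r) then μ ω else 0) := by
            rw [if_pos]; intro r hr; exact (Finset.mem_filter.mp hr).2
        _ ≤ ∑ S ∈ 𝒮, (if (∀ r ∈ S, ω ∈ E r) then μ ω else 0) :=
            Finset.single_le_sum (fun S _ => hifnn ω S) hmem
    calc ∑ ω ∈ Ei, μ ω ≤ ∑ ω ∈ Ei, ∑ S ∈ 𝒮, (if (∀ r ∈ S, ω ∈ E r) then μ ω else 0) :=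
          Finset.sum_le_sum hpt
      _ = ∑ S ∈ 𝒮, ∑ ω ∈ Ei, (if (∀ r ∈ S, ω ∈ E r) then μ ω else 0) := Finset.sum_comm
      _ ≤ ∑ S ∈ 𝒮, ∑ ω : Ω, (if (∀ r ∈ S, ω ∈ E r) then μ ω else 0) :=
          Finset.sum_le_sum (fun S _ =>
            Finset.sum_le_sum_of_subset_of_nonneg (Finset.subset_univ Ei)
              (fun ω _ _ => hifnn ω S))
      _ = ∑ S ∈ 𝒮, ∑ ω ∈ Finset.univ.filter (fun ω => ∀ r ∈ S, ω ∈ E r), μ ω :=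
          Finset.sum_congr rfl (fun S _ => (Finset.sum_filter _ _).symm)
  have hstep2 : ∀ S ∈ 𝒮,
      ∑ ω ∈ Finset.univ.filter (fun ω => ∀ r ∈ S, ω ∈ E r), μ ω ≤ (2:ℝ) ^ I.card * X := by
    intro S hS
    obtain ⟨hSI, hW⟩ := Finset.mem_filter.mp hS
    have hSI' : S ⊆ I := Finset.mem_powerset.mp hSI
    have hprod : ∏ p ∈ S, g p =
        (2:ℝ) ^ S.card * (2:ℝ) ^ (∑ p ∈ S, (-(0.2:ℝ) * (b p : ℝ) * LL)) := by
      rw [hgdef]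
      rw [Finset.prod_mul_distrib, Finset.prod_const, stmt13_prod_rpow]
    have hsumexp : ∑ p ∈ S, (-(0.2:ℝ) * (b p : ℝ) * LL) =
        -(0.2:ℝ) * (∑ p ∈ S, (b p : ℝ)) * LL := by
      rw [← Finset.sum_mul, ← Finset.mul_sum]
    have hWK : (n:ℝ) / (8 * γ) ≤ ∑ p ∈ S, (b p : ℝ) := hW
    have hexp : -(0.2:ℝ) * (∑ p ∈ S, (b p : ℝ)) * LL ≤ -(0.025:ℝ) * ((n:ℝ) / γ) * LL := by
      have hW' : ((n:ℝ) / γ) / 8 ≤ ∑ p ∈ S, (b p : ℝ) := by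
        have : (n:ℝ) / (8 * γ) = ((n:ℝ) / γ) / 8 := by ring
        linarith [hWK, this.symm.le]
      nlinarith [mul_le_mul_of_nonneg_right hW' hLL0]
    have hr1 : (2:ℝ) ^ (∑ p ∈ S, (-(0.2:ℝ) * (b p : ℝ) * LL)) ≤ X := by
      rw [hsumexp, hXdef]
      exact Real.rpow_le_rpow_of_exponent_le one_le_two hexp
    have hr2 : (2:ℝ) ^ S.card ≤ (2:ℝ) ^ I.card :=
      pow_le_pow_right₀ one_le_two (Finset.card_le_card hSI')
    calc ∑ ω ∈ Finset.univ.filter (fun ω => ∀ r ∈ S, ω ∈ E r), μ ω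
        ≤ ∏ p ∈ S, g p := hchain S hSI'
      _ = (2:ℝ) ^ S.card * (2:ℝ) ^ (∑ p ∈ S, (-(0.2:ℝ) * (b p : ℝ) * LL)) := hprod
      _ ≤ (2:ℝ) ^ I.card * X := by
          apply mul_le_mul hr2 hr1 (Real.rpow_nonneg (by norm_num) _) (by positivity)
  have part1 : ∑ ω ∈ Ei, μ ω ≤ 4 ^ I.card * X := by
    have hcard : (𝒮.card : ℝ) ≤ (2:ℝ) ^ I.card := by
      have h1 : 𝒮.card ≤ I.powerset.card := Finset.card_filter_le _ _
      have h2 : I.powerset.card = 2 ^ I.card := Finset.card_powerset I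
      have : (𝒮.card : ℝ) ≤ ((2 ^ I.card : ℕ) : ℝ) := by exact_mod_cast h1.trans h2.le
      simpa using this
    calc ∑ ω ∈ Ei, μ ω
        ≤ ∑ S ∈ 𝒮, ∑ ω ∈ Finset.univ.filter (fun ω => ∀ r ∈ S, ω ∈ E r), μ ω := hstep1
      _ ≤ 𝒮.card • ((2:ℝ) ^ I.card * X) := Finset.sum_le_card_nsmul _ _ _ hstep2
      _ = (𝒮.card : ℝ) * ((2:ℝ) ^ I.card * X) := by rw [nsmul_eq_mul]
      _ ≤ (2:ℝ) ^ I.card * ((2:ℝ) ^ I.card * X) :=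
          mul_le_mul_of_nonneg_right hcard (by positivity)
      _ = 4 ^ I.card * X := by rw [← mul_assoc, ← mul_pow]; norm_num
  refine ⟨part1, ?_⟩
  -- part 2
  have hsq : (0:ℝ) < Real.sqrt n := Real.sqrt_pos.mpr hnpos
  have hIcard : (I.card : ℝ) ≤ Real.sqrt n := by
    have h1 : (I.card : ℝ) * Real.sqrt n ≤ ∑ p ∈ I, (b p : ℝ) := by
      calc (I.card : ℝ) * Real.sqrt n = ∑ _p ∈ I, Real.sqrt n := by
            rw [Finset.sum_const, nsmul_eq_mul]
        _ ≤ ∑ p ∈ I, (b p : ℝ) := Finset.sum_le_sum hb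
    have h2 : (I.card : ℝ) ≤ (n:ℝ) / Real.sqrt n := by
      rw [le_div_iff₀ hsq]; linarith
    rwa [Real.div_sqrt] at h2
  -- key inequality : 2√n ≤ 0.005 (n/γ) LL
  have hLc : L ^ c ≤ (n:ℝ) ^ (0.01:ℝ) := by
    have hcl : (c:ℝ) * LL ≤ L / 100 := by
      have hLLpos : (0:ℝ) < 100 * LL := by linarith
      have := (le_div_iff₀ hLLpos).mp hc2
      linarith
    calc L ^ c = L ^ ((c:ℕ):ℝ) := (Real.rpow_natCast L c).symm
      _ = ((2:ℝ) ^ LL) ^ ((c:ℕ):ℝ) := by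
          rw [hLLdef, Real.rpow_logb two_pos (by norm_num) hLpos]
      _ = (2:ℝ) ^ (LL * (c:ℝ)) := by
          rw [← Real.rpow_mul (by norm_num : (0:ℝ) ≤ 2)]
      _ ≤ (2:ℝ) ^ (L * (0.01:ℝ)) := by
          apply Real.rpow_le_rpow_of_exponent_le one_le_two
          nlinarith
      _ = ((2:ℝ) ^ L) ^ (0.01:ℝ) := Real.rpow_mul (by norm_num) _ _
      _ = (n:ℝ) ^ (0.01:ℝ) := by
          rw [hLdef, Real.rpow_logb two_pos (by norm_num) hnpos]
  have hγle : γ ≤ 0.0025 * (n:ℝ) ^ (0.01:ℝ) * (n:ℝ) ^ (0.49:ℝ) := by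
    have hsplit : γ = L ^ c * L ^ (1000:ℕ) := by rw [hγdef, pow_add]
    have h1 : L ^ c * L ^ (1000:ℕ) ≤ (n:ℝ) ^ (0.01:ℝ) * (0.0025 * (n:ℝ) ^ (0.49:ℝ)) := by
      apply mul_le_mul hLc hP (by positivity) (by positivity)
    rw [hsplit]; linarith
  have hn5 : (n:ℝ) ^ (0.01:ℝ) * (n:ℝ) ^ (0.49:ℝ) = (n:ℝ) ^ (0.5:ℝ) := by
    rw [← Real.rpow_add hnpos]; norm_num
  have hsqr : Real.sqrt n = (n:ℝ) ^ (0.5:ℝ) := by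
    rw [Real.sqrt_eq_rpow]; norm_num
  have hkey0 : 2 * Real.sqrt n * γ ≤ 0.005 * (n:ℝ) := by
    have h1 : 2 * Real.sqrt n * γ ≤ 2 * Real.sqrt n * (0.0025 * ((n:ℝ) ^ (0.01:ℝ) * (n:ℝ) ^ (0.49:ℝ))) := by
      have := mul_le_mul_of_nonneg_left hγle (by positivity : (0:ℝ) ≤ 2 * Real.sqrt n)
      linarith [this]
    have h2 : 2 * Real.sqrt n * (0.0025 * ((n:ℝ) ^ (0.01:ℝ) * (n:ℝ) ^ (0.49:ℝ)))
        = 0.005 * ((n:ℝ) ^ (0.5:ℝ) * (n:ℝ) ^ (0.5:ℝ)) := by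
      rw [hn5, hsqr]; ring
    have h3 : (n:ℝ) ^ (0.5:ℝ) * (n:ℝ) ^ (0.5:ℝ) = (n:ℝ) := by
      rw [← Real.rpow_add hnpos]; norm_num
    calc 2 * Real.sqrt n * γ ≤ 0.005 * ((n:ℝ) ^ (0.5:ℝ) * (n:ℝ) ^ (0.5:ℝ)) := by
          rw [← h2]; exact h1
      _ = 0.005 * (n:ℝ) := by rw [h3]
  have hkey : 2 * Real.sqrt n ≤ 0.005 * ((n:ℝ) / γ) * LL := by
    have h5 : 2 * Real.sqrt n ≤ 0.005 * (n:ℝ) / γ := (le_div_iff₀ hγpos).mpr hkey0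
    have h6 : 0.005 * ((n:ℝ) / γ) * LL = (0.005 * (n:ℝ) / γ) * LL := by ring
    rw [h6]
    have hA0 : (0:ℝ) ≤ 0.005 * (n:ℝ) / γ :=
      le_trans (by positivity : (0:ℝ) ≤ 2 * Real.sqrt n) h5
    exact h5.trans (le_mul_of_one_le_right hA0 (by linarith))
  -- conclude
  have h4pow : (4:ℝ) ^ I.card = (2:ℝ) ^ ((2 * I.card : ℕ) : ℝ) := by
    rw [Real.rpow_natCast, pow_mul]; norm_num
  have hfinal : (4:ℝ) ^ I.card * X ≤
      (2:ℝ) ^ (-(0.02:ℝ) * ((n:ℝ) / γ) * LL) := by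
    rw [h4pow, hXdef, ← Real.rpow_add two_pos]
    apply Real.rpow_le_rpow_of_exponent_le one_le_two
    have hc2I : ((2 * I.card : ℕ) : ℝ) = 2 * (I.card : ℝ) := by push_cast; ring
    rw [hc2I]
    revert hkey
    generalize ((n:ℝ)/γ) = M
    intro hkey
    linarith only [hIcard, hkey]
  exact part1.trans hfinal
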